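/- arXiv:1506.07221 — 9 statements merged into one kernel-verified Lean document; each statement's English description precedes it below -/
import Mathlib

section
/- Let m ≥ 1. Suppose F, G : ℝ^{m+2} → ℝ^{m+2} and ψ_v, ψ_c : ℝ^{m+2} → ℝ^{m+2} are maps satisfying ψ_v ∘ G = F ∘ ψ_c and π_y ∘ ψ_v ∘ G = π_x ∘ ψ_c. Suppose X₀, Y₀, X₁, Y₁ : ℝ^{m+2} → ℝ^m, Z₀, Z₁ : ℝ^{m+2} → M_m(ℝ) and q : ℝ → ℝ^m satisfy, for all w ∈ ℝ^{m+2}: X₁(w) = X₀(ψ_c(w)) − q(π_x(ψ_c(w))); Y₁(w) = Z₀(ψ_c(w)) · (Y₀(ψ_v(w)) + Z₀(ψ_v(w)) · q(π_y(ψ_v(w)))); and Z₁(w) = Z₀(ψ_c(w)) · Z₀(ψ_v(w)). If Y₀(F(u)) + Z₀(F(u)) · X₀(u) = 0 for every u in the image of ψ_c, then Y₁(G(w)) + Z₁(G(w)) · X₁(w) = 0 for every w ∈ ℝ^{m+2}. (This is the inductive step proving that the class 𝒩 of Hénon-like maps is invariant under the renormalization operator.) -/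
/-- Points of `ℝ^{m+2}` written as `(x, y, z)` with `x y : ℝ`, `z : Fin m → ℝ`. -/
abbrev HenonSpace (m : ℕ) : Type := ℝ × ℝ × (Fin m → ℝ)

/-- The inductive step proving that the class 𝒩 of Hénon-like maps is invariant
under the renormalization operator. -/
theorem henon_class_N_invariant_step {m : ℕ} (hm : 1 ≤ m)
    (F G ψv ψc : HenonSpace m → HenonSpace m)
    (X₀ Y₀ X₁ Y₁ : HenonSpace m → Fin m → ℝ)
    (Z₀ Z₁ : HenonSpace m → Matrix (Fin m) (Fin m) ℝ)
    (q : ℝ → Fin m → ℝ)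
    (hcomm : ψv ∘ G = F ∘ ψc)
    (hyx : ∀ w, (ψv (G w)).2.1 = (ψc w).1)
    (hX : ∀ w, X₁ w = X₀ (ψc w) - q ((ψc w).1))
    (hY : ∀ w, Y₁ w =
      (Z₀ (ψc w)).mulVec (Y₀ (ψv w) + (Z₀ (ψv w)).mulVec (q ((ψv w).2.1))))
    (hZ : ∀ w, Z₁ w = Z₀ (ψc w) * Z₀ (ψv w))
    (hN : ∀ u ∈ Set.range ψc, Y₀ (F u) + (Z₀ (F u)).mulVec (X₀ u) = 0) :
    ∀ w, Y₁ (G w) + (Z₁ (G w)).mulVec (X₁ w) = 0 := by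
  intro w
  have hv : ψv (G w) = F (ψc w) := congrFun hcomm w
  have hN' := hN (ψc w) ⟨w, rfl⟩
  rw [hY, hZ, hX, hyx, hv, ← Matrix.mulVec_mulVec, ← Matrix.mulVec_add,
    Matrix.mulVec_sub]
  have : Y₀ (F (ψc w)) + (Z₀ (F (ψc w))).mulVec (q ((ψc w).1)) +
      ((Z₀ (F (ψc w))).mulVec (X₀ (ψc w)) - (Z₀ (F (ψc w))).mulVec (q ((ψc w).1)))
      = Y₀ (F (ψc w)) + (Z₀ (F (ψc w))).mulVec (X₀ (ψc w)) := by abel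
  rw [this, hN', Matrix.mulVec_zero]
end

section
/- Let D be a set, m ≥ 1. For n ≥ 0 let Y_n : D → ℝ^m and Z_n : D → M_m(ℝ), and for n ≥ 1 let ψ^n_v, ψ^n_c : D → D and q_{n−1} : ℝ → ℝ^m, where D ⊆ ℝ^{m+2} and π_y is the second coordinate projection. Suppose for all n ≥ 1 and w ∈ D: Z_n(w) = Z_{n−1}(ψ^n_c(w)) · Z_{n−1}(ψ^n_v(w)) and Y_n(w) = Z_{n−1}(ψ^n_c(w)) · [Y_{n−1}(ψ^n_v(w)) + Z_{n−1}(ψ^n_v(w)) · q_{n−1}(π_y(ψ^n_v(w)))], and suppose every matrix Z_j(u) (j ≥ 0, u ∈ D) is invertible. With Ψ^n_{k,v} = ψ^{k+1}_v ∘ ⋯ ∘ ψ^n_v (and Ψ^n_{n,v} = id), for all 0 ≤ k < n and w ∈ D: Y_n(w) = Z_n(w) · [ (Z_k(Ψ^n_{k,v}(w)))⁻¹ · Y_k(Ψ^n_{k,v}(w)) + Σ_{i=k}^{n−1} q_i(π_y(Ψ^n_{i,v}(w))) ]. -/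
/-- `iterComp ψ k j = ψ^{k+1} ∘ ψ^{k+2} ∘ ⋯ ∘ ψ^{k+j}`, so that
`Ψ^n_k = iterComp ψ k (n - k)` (and `Ψ^n_n = id`). -/
def iterComp {α : Type*} (ψ : ℕ → α → α) (k : ℕ) : ℕ → α → α
  | 0 => id
  | j + 1 => iterComp ψ k j ∘ ψ (k + j + 1)


lemma iterComp_succ' {α : Type*} (ψ : ℕ → α → α) (k j : ℕ) (w : α) :
    iterComp ψ k (j + 1) w = iterComp ψ k j (ψ (k + j + 1) w) := rfl

/-- Exact formula relating `Y_n, Z_n` with `Y_k, Z_k` (Lemma 4.3 of the paper). -/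
theorem henon_Yn_formula {m : ℕ} (hm : 1 ≤ m) (D : Set (HenonSpace m))
    (Y : ℕ → HenonSpace m → Fin m → ℝ)
    (Z : ℕ → HenonSpace m → Matrix (Fin m) (Fin m) ℝ)
    (ψv ψc : ℕ → HenonSpace m → HenonSpace m)
    (q : ℕ → ℝ → Fin m → ℝ)
    (hmv : ∀ n, Set.MapsTo (ψv (n + 1)) D D)
    (hmc : ∀ n, Set.MapsTo (ψc (n + 1)) D D)
    (hZ : ∀ n, ∀ w ∈ D,
      Z (n + 1) w = Z n (ψc (n + 1) w) * Z n (ψv (n + 1) w))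
    (hY : ∀ n, ∀ w ∈ D,
      Y (n + 1) w = (Z n (ψc (n + 1) w)).mulVec
        (Y n (ψv (n + 1) w)
          + (Z n (ψv (n + 1) w)).mulVec (q n ((ψv (n + 1) w).2.1))))
    (hinv : ∀ j : ℕ, ∀ u ∈ D, IsUnit (Z j u)) :
    ∀ k n : ℕ, k < n → ∀ w ∈ D,
      Y n w = (Z n w).mulVec
        (((Z k (iterComp ψv k (n - k) w))⁻¹).mulVec (Y k (iterComp ψv k (n - k) w))
          + ∑ i ∈ Finset.Ico k n, q i ((iterComp ψv i (n - i) w).2.1)) := by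

  intro k n
  induction n with
  | zero => omega
  | succ n ih =>
    intro hk w hw
    rcases Nat.lt_succ_iff_lt_or_eq.mp hk with hk' | rfl
    · -- inductive step: k < n
      have hw1 : ψv (n + 1) w ∈ D := hmv n hw
      have key := ih hk' (ψv (n + 1) w) hw1
      have hΨ : ∀ i, i ≤ n →
          iterComp ψv i (n + 1 - i) w = iterComp ψv i (n - i) (ψv (n + 1) w) := by
        intro i hi
        have h1 : n + 1 - i = (n - i) + 1 := by omega
        rw [h1, iterComp_succ']
        congr 2
        omega
      have e1 := hΨ k hk'.le
      have e2 : iterComp ψv n (n + 1 - n) w = ψv (n + 1) w := by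
        have h1 : n + 1 - n = 1 := by omega
        rw [h1]; rfl
      have e3 : ∀ i ∈ Finset.Ico k n,
          q i ((iterComp ψv i (n + 1 - i) w).2.1)
            = q i ((iterComp ψv i (n - i) (ψv (n + 1) w)).2.1) := by
        intro i hi
        rw [hΨ i (Finset.mem_Ico.mp hi).2.le]
      rw [hY n w hw, key, hZ n w hw, Finset.sum_Ico_succ_top hk'.le, e1, e2,
        Finset.sum_congr rfl e3, ← Matrix.mulVec_add, ← Matrix.mulVec_mulVec]
      congr 1
      rw [add_assoc]
    · -- base case: n = k
      have hw1 : ψv (k + 1) w ∈ D := hmv k hw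
      have hd : IsUnit (Z k (ψv (k + 1) w)).det :=
        (Matrix.isUnit_iff_isUnit_det _).mp (hinv k _ hw1)
      have e2 : iterComp ψv k (k + 1 - k) w = ψv (k + 1) w := by
        have h1 : k + 1 - k = 1 := by omega
        rw [h1]; rfl
      have hc : (Z k (ψv (k + 1) w)).mulVec
          ((Z k (ψv (k + 1) w))⁻¹.mulVec (Y k (ψv (k + 1) w)) + q k ((ψv (k + 1) w).2.1))
          = Y k (ψv (k + 1) w) + (Z k (ψv (k + 1) w)).mulVec (q k ((ψv (k + 1) w).2.1)) := by
        rw [Matrix.mulVec_add, Matrix.mulVec_mulVec, Matrix.mul_nonsing_inv _ hd,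
          Matrix.one_mulVec]
      rw [hY k w hw, hZ k w hw, Finset.sum_Ico_succ_top le_rfl, Finset.Ico_self,
        Finset.sum_empty, zero_add, e2, ← Matrix.mulVec_mulVec, hc]
end

section
/- Let m ≥ 1 and N ≥ 1. Suppose for all 0 ≤ k < n ≤ N we are given real numbers α_{n,k} and σ_{n,k} ≠ 0, t_{n,k} ∈ ℝ, row vectors u_{n,k} ∈ ℝ^m and column vectors d_{n,k} ∈ ℝ^m, and form the (m+2)×(m+2) block matrix D^n_k = [[α_{n,k}, σ_{n,k} t_{n,k}, σ_{n,k} u_{n,k}], [0, σ_{n,k}, 0], [0, σ_{n,k} d_{n,k}, σ_{n,k} I_m]]. If D^n_k = D^m_k · D^n_m for all k < m < n ≤ N, then for all 0 ≤ k < n ≤ N (with the conventions d_{n,n} = 0 and empty products equal to 1): σ_{n,k} = σ_{m,k}·σ_{n,m} and α_{n,k} = α_{m,k}·α_{n,m} for k < m < n; d_{n,k} = Σ_{i=k}^{n−1} d_{i+1,i}; u_{n,k} = Σ_{i=k}^{n−1} (∏_{j=k}^{i−1} α_{j+1,j}/σ_{j+1,j}) · u_{i+1,i}; t_{n,k} =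 Σ_{i=k}^{n−1} (∏_{j=k}^{i−1} α_{j+1,j}/σ_{j+1,j}) · (t_{i+1,i} + u_{i+1,i} · d_{n,i+1}); and t_{n,k} − u_{n,k} · d_{n,k} = Σ_{i=k}^{n−1} (∏_{j=k}^{i−1} α_{j+1,j}/σ_{j+1,j}) · (t_{i+1,i} − u_{i+1,i} · d_{i+1,k}). -/
def henonBlockMatrix (m : ℕ) (a s t : ℝ) (u d : Fin m → ℝ) :
    Matrix (Fin 1 ⊕ Fin 1 ⊕ Fin m) (Fin 1 ⊕ Fin 1 ⊕ Fin m) ℝ :=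
  fun i j =>
    match i, j with
    | .inl _, .inl _ => a
    | .inl _, .inr (.inl _) => s * t
    | .inl _, .inr (.inr i') => s * u i'
    | .inr (.inl _), .inl _ => 0
    | .inr (.inl _), .inr (.inl _) => s
    | .inr (.inl _), .inr (.inr _) => 0
    | .inr (.inr _), .inl _ => 0
    | .inr (.inr i'), .inr (.inl _) => s * d i'
    | .inr (.inr i'), .inr (.inr j') => if i' = j' then s else 0

lemma henon_key {m : ℕ} {a1 s1 t1 a2 s2 t2 a3 s3 t3 : ℝ} {u1 d1 u2 d2 u3 d3 : Fin m → ℝ}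
    (hs1 : s1 ≠ 0) (hs2 : s2 ≠ 0)
    (h : henonBlockMatrix m a3 s3 t3 u3 d3
      = henonBlockMatrix m a1 s1 t1 u1 d1 * henonBlockMatrix m a2 s2 t2 u2 d2) :
    a3 = a1 * a2 ∧ s3 = s1 * s2 ∧ (∀ i, d3 i = d1 i + d2 i)
      ∧ (∀ j, u3 j = (a1 / s1) * u2 j + u1 j)
      ∧ t3 = (a1 / s1) * t2 + t1 + ∑ x, u1 x * d2 x := by
  have hA := congrFun (congrFun h (Sum.inl 0)) (Sum.inl 0)
  have hS := congrFun (congrFun h (Sum.inr (Sum.inl 0))) (Sum.inr (Sum.inl 0))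
  have hT := congrFun (congrFun h (Sum.inl 0)) (Sum.inr (Sum.inl 0))
  simp [henonBlockMatrix, Matrix.mul_apply, Fintype.sum_sum_type] at hA hS hT
  have hD := fun i : Fin m => congrFun (congrFun h (Sum.inr (Sum.inr i))) (Sum.inr (Sum.inl 0))
  have hU := fun j : Fin m => congrFun (congrFun h (Sum.inl 0)) (Sum.inr (Sum.inr j))
  simp [henonBlockMatrix, Matrix.mul_apply, Fintype.sum_sum_type] at hD hU
  rw [hS] at hT hD hU
  have hsum : (∑ x, s1 * u1 x * (s2 * d2 x)) = s1 * s2 * ∑ x, u1 x * d2 x := by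
    rw [Finset.mul_sum]; exact Finset.sum_congr rfl fun x _ => by ring
  rw [hsum] at hT
  refine ⟨hA, hS, ?_, ?_, ?_⟩
  · intro i
    exact mul_left_cancel₀ (mul_ne_zero hs1 hs2) (by linear_combination hD i)
  · intro j
    field_simp
    exact mul_left_cancel₀ hs2 (by linear_combination hU j)
  · field_simp
    exact mul_left_cancel₀ hs2 (by linear_combination hT)

/-- Recursive formulas for the entries of the derivative of the scaling maps at the tip
(Proposition 5.1): if the block matrices `D^n_k` satisfy the cocycle relation
`D^n_k = D^l_k · D^n_l`, then `σ, α` are multiplicative and `d, u, t, t − u·d`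
satisfy the stated telescoped sums. -/
theorem henon_tip_derivative_recursion {m N : ℕ} (hm : 1 ≤ m) (hN : 1 ≤ N)
    (a s t : ℕ → ℕ → ℝ) (u d : ℕ → ℕ → Fin m → ℝ)
    (hs : ∀ k n : ℕ, k < n → n ≤ N → s n k ≠ 0)
    (hd0 : ∀ n : ℕ, d n n = 0)
    (hcocycle : ∀ k l n : ℕ, k < l → l < n → n ≤ N →
      henonBlockMatrix m (a n k) (s n k) (t n k) (u n k) (d n k)
        = henonBlockMatrix m (a l k) (s l k) (t l k) (u l k) (d l k)
          * henonBlockMatrix m (a n l) (s n l) (t n l) (u n l) (d n l)) :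
    (∀ k l n : ℕ, k < l → l < n → n ≤ N →
        s n k = s l k * s n l ∧ a n k = a l k * a n l)
    ∧ (∀ k n : ℕ, k < n → n ≤ N →
        d n k = ∑ i ∈ Finset.Ico k n, d (i + 1) i)
    ∧ (∀ k n : ℕ, k < n → n ≤ N →
        u n k = ∑ i ∈ Finset.Ico k n,
          (∏ j ∈ Finset.Ico k i, a (j + 1) j / s (j + 1) j) • u (i + 1) i)
    ∧ (∀ k n : ℕ, k < n → n ≤ N →
        t n k = ∑ i ∈ Finset.Ico k n,
          (∏ j ∈ Finset.Ico k i, a (j + 1) j / s (j + 1) j)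
            * (t (i + 1) i + ∑ x, u (i + 1) i x * d n (i + 1) x))
    ∧ (∀ k n : ℕ, k < n → n ≤ N →
        t n k - ∑ x, u n k x * d n k x = ∑ i ∈ Finset.Ico k n,
          (∏ j ∈ Finset.Ico k i, a (j + 1) j / s (j + 1) j)
            * (t (i + 1) i - ∑ x, u (i + 1) i x * d (i + 1) k x)) := by
  have key : ∀ k l n : ℕ, k < l → l < n → n ≤ N →
      a n k = a l k * a n l ∧ s n k = s l k * s n l
        ∧ (∀ i, d n k i = d l k i + d n l i)
        ∧ (∀ j, u n k j = (a l k / s l k) * u n l j + u l k j)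
        ∧ t n k = (a l k / s l k) * t n l + t l k + ∑ x, u l k x * d n l x :=
    fun k l n hkl hln hnN =>
      henon_key (hs k l hkl (le_of_lt (lt_of_lt_of_le hln hnN))) (hs l n hln hnN)
        (hcocycle k l n hkl hln hnN)
  -- d part
  have hd : ∀ c k n : ℕ, n = k + c → k < n → n ≤ N →
      d n k = ∑ i ∈ Finset.Ico k n, d (i + 1) i := by
    intro c
    induction c with
    | zero => intro k n h1 h2 _; omega
    | succ c ih =>
      intro k n h1 h2 hnN
      rcases Nat.eq_zero_or_pos c with hc | hc
      · have hn : n = k + 1 := by omega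
        subst hn
        simp [Nat.Ico_succ_singleton]
      · have hk1 : k + 1 < n := by omega
        have hrec := (key k (k + 1) n (by omega) hk1 hnN).2.2.1
        have ihrec := ih (k + 1) n (by omega) hk1 hnN
        rw [Finset.sum_eq_sum_Ico_succ_bot h2, ← ihrec]
        funext x
        simpa using hrec x
  -- u part
  have hu : ∀ c k n : ℕ, n = k + c → k < n → n ≤ N →
      u n k = ∑ i ∈ Finset.Ico k n,
        (∏ j ∈ Finset.Ico k i, a (j + 1) j / s (j + 1) j) • u (i + 1) i := by
    intro c
    induction c with
    | zero => intro k n h1 h2 _; omega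
    | succ c ih =>
      intro k n h1 h2 hnN
      rcases Nat.eq_zero_or_pos c with hc | hc
      · have hn : n = k + 1 := by omega
        subst hn
        simp [Nat.Ico_succ_singleton]
      · have hk1 : k + 1 < n := by omega
        have hrec := (key k (k + 1) n (by omega) hk1 hnN).2.2.2.1
        have ihrec := ih (k + 1) n (by omega) hk1 hnN
        rw [Finset.sum_eq_sum_Ico_succ_bot h2]
        have hstep : ∑ i ∈ Finset.Ico (k + 1) n,
            (∏ j ∈ Finset.Ico k i, a (j + 1) j / s (j + 1) j) • u (i + 1) i
            = (a (k + 1) k / s (k + 1) k) •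
              ∑ i ∈ Finset.Ico (k + 1) n,
                (∏ j ∈ Finset.Ico (k + 1) i, a (j + 1) j / s (j + 1) j) • u (i + 1) i := by
          rw [Finset.smul_sum]
          refine Finset.sum_congr rfl fun i hi => ?_
          rw [Finset.prod_eq_prod_Ico_succ_bot (Finset.mem_Ico.mp hi).1, mul_smul]
        rw [hstep, ← ihrec]
        funext x
        simp only [Finset.Ico_self, Finset.prod_empty, one_smul, Pi.add_apply, Pi.smul_apply,
          smul_eq_mul]
        linarith [hrec x]
  -- t part
  have ht : ∀ c k n : ℕ, n = k + c → k < n → n ≤ N →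
      t n k = ∑ i ∈ Finset.Ico k n,
        (∏ j ∈ Finset.Ico k i, a (j + 1) j / s (j + 1) j)
          * (t (i + 1) i + ∑ x, u (i + 1) i x * d n (i + 1) x) := by
    intro c
    induction c with
    | zero => intro k n h1 h2 _; omega
    | succ c ih =>
      intro k n h1 h2 hnN
      rcases Nat.eq_zero_or_pos c with hc | hc
      · have hn : n = k + 1 := by omega
        subst hn
        simp [Nat.Ico_succ_singleton, hd0]
      · have hk1 : k + 1 < n := by omega
        have hrec := (key k (k + 1) n (by omega) hk1 hnN).2.2.2.2
        have ihrec := ih (k + 1) n (by omega) hk1 hnN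
        rw [Finset.sum_eq_sum_Ico_succ_bot h2]
        have hstep : ∑ i ∈ Finset.Ico (k + 1) n,
            (∏ j ∈ Finset.Ico k i, a (j + 1) j / s (j + 1) j)
              * (t (i + 1) i + ∑ x, u (i + 1) i x * d n (i + 1) x)
            = (a (k + 1) k / s (k + 1) k) *
              ∑ i ∈ Finset.Ico (k + 1) n,
                (∏ j ∈ Finset.Ico (k + 1) i, a (j + 1) j / s (j + 1) j)
                  * (t (i + 1) i + ∑ x, u (i + 1) i x * d n (i + 1) x) := by
          rw [Finset.mul_sum]
          refine Finset.sum_congr rfl fun i hi => ?_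
          rw [Finset.prod_eq_prod_Ico_succ_bot (Finset.mem_Ico.mp hi).1]
          ring
        rw [hstep, ← ihrec]
        simp only [Finset.Ico_self, Finset.prod_empty, one_mul]
        linarith [hrec]
  -- d split lemma
  have hdsplit : ∀ k i n : ℕ, k ≤ i → i < n → n ≤ N → ∀ x,
      d n k x = d (i + 1) k x + d n (i + 1) x := by
    intro k i n hki hin hnN x
    have h1 : d n k = ∑ j ∈ Finset.Ico k n, d (j + 1) j :=
      hd (n - k) k n (by omega) (by omega) hnN
    have h2 : d (i + 1) k = ∑ j ∈ Finset.Ico k (i + 1), d (j + 1) j :=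
      hd (i + 1 - k) k (i + 1) (by omega) (by omega) (by omega)
    have h3 : d n (i + 1) = ∑ j ∈ Finset.Ico (i + 1) n, d (j + 1) j := by
      rcases Nat.eq_or_lt_of_le (Nat.succ_le_of_lt hin) with he | hlt
      · rw [← he, hd0, Finset.Ico_self, Finset.sum_empty]
      · exact hd (n - (i + 1)) (i + 1) n (by omega) hlt hnN
    have h4 : (∑ j ∈ Finset.Ico k (i + 1), d (j + 1) j)
        + ∑ j ∈ Finset.Ico (i + 1) n, d (j + 1) j = ∑ j ∈ Finset.Ico k n, d (j + 1) j :=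
      Finset.sum_Ico_consecutive _ (by omega) (by omega)
    rw [h1, h2, h3, ← h4]
    simp
  refine ⟨fun k l n hkl hln hnN => ⟨(key k l n hkl hln hnN).2.1, (key k l n hkl hln hnN).1⟩,
    fun k n hkn hnN => hd (n - k) k n (by omega) hkn hnN,
    fun k n hkn hnN => hu (n - k) k n (by omega) hkn hnN,
    fun k n hkn hnN => ht (n - k) k n (by omega) hkn hnN, ?_⟩
  intro k n hkn hnN
  rw [ht (n - k) k n (by omega) hkn hnN, hu (n - k) k n (by omega) hkn hnN]
  have hswap : ∑ x, (∑ i ∈ Finset.Ico k n,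
      (∏ j ∈ Finset.Ico k i, a (j + 1) j / s (j + 1) j) • u (i + 1) i) x * d n k x
      = ∑ i ∈ Finset.Ico k n,
        (∏ j ∈ Finset.Ico k i, a (j + 1) j / s (j + 1) j) * ∑ x, u (i + 1) i x * d n k x := by
    simp only [Finset.sum_apply, Pi.smul_apply, smul_eq_mul, Finset.sum_mul, Finset.mul_sum]
    rw [Finset.sum_comm]
    exact Finset.sum_congr rfl fun y _ => Finset.sum_congr rfl fun x _ => by ring
  rw [hswap, ← Finset.sum_sub_distrib]
  refine Finset.sum_congr rfl fun i hi => ?_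
  obtain ⟨hki, hin⟩ := Finset.mem_Ico.mp hi
  have hS : ∑ x, u (i + 1) i x * d (i + 1) k x
      = ∑ x, u (i + 1) i x * d n k x - ∑ x, u (i + 1) i x * d n (i + 1) x := by
    rw [← Finset.sum_sub_distrib]
    exact Finset.sum_congr rfl fun x _ => by rw [hdsplit k i n hki hin hnN x]; ring
  linear_combination (∏ j ∈ Finset.Ico k i, a (j + 1) j / s (j + 1) j) * hS
end

section
/- Let m ≥ 1, 0 < σ̄ < 1 and 0 < ε̄ ≤ σ̄². Suppose for all 0 ≤ k < n we are given C² functions R_{n,k} : [−1,1] → ℝ^m with R_{n,k}(0) = 0 and R'_{n,k}(0) = 0, and scalars σ_{n,n−1} with |σ_{n,n−1}| ≤ σ̄, satisfying the recursion R_{n,k}(y) = R_{n,n−1}(y) + σ_{n,n−1}⁻¹ · R_{n−1,k}(σ_{n,n−1}·y) for all k < n−1 and y ∈ [−1,1] (with σ_{n,n−1} ≠ 0), and the bound sup_{|y|≤1} ‖R''_{n,n−1}(y)‖ ≤ ε̄^{2^{n−1}} for every n ≥ 1. Then there exists a constant C > 0 depending only on σ̄ such that for all 0 ≤ k < n: sup_{|y|≤1}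 ‖R_{n,k}(y)‖ ≤ C·σ̄^{n−k} and sup_{|y|≤1} ‖R'_{n,k}(y)‖ ≤ C·σ̄^{n−k}. -/
/-- Exponential smallness of the nonlinear parts `R_{n,k}` and their derivatives
(Proposition 5.2): the constant `C` depends only on `σ̄`. -/
theorem henon_R_exponential_smallness (σb : ℝ) (hσ0 : 0 < σb) (hσ1 : σb < 1) :
    ∃ C > (0 : ℝ), ∀ (m : ℕ), 1 ≤ m → ∀ (εb : ℝ), 0 < εb → εb ≤ σb ^ 2 →
      ∀ (R R' R'' : ℕ → ℕ → ℝ → EuclideanSpace ℝ (Fin m)) (σstep : ℕ → ℝ),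
        (∀ n k : ℕ, ∀ y ∈ Set.Icc (-1 : ℝ) 1, HasDerivAt (R n k) (R' n k y) y) →
        (∀ n k : ℕ, ∀ y ∈ Set.Icc (-1 : ℝ) 1, HasDerivAt (R' n k) (R'' n k y) y) →
        (∀ n k : ℕ, R n k 0 = 0) →
        (∀ n k : ℕ, R' n k 0 = 0) →
        (∀ n : ℕ, σstep n ≠ 0) →
        (∀ n : ℕ, |σstep n| ≤ σb) →
        (∀ k n : ℕ, k < n → ∀ y ∈ Set.Icc (-1 : ℝ) 1,
          R (n + 1) k y = R (n + 1) n y + (σstep n)⁻¹ • R n k (σstep n * y)) →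
        (∀ n : ℕ, ∀ y ∈ Set.Icc (-1 : ℝ) 1, ‖R'' (n + 1) n y‖ ≤ εb ^ (2 ^ n)) →
        ∀ k n : ℕ, k < n → ∀ y ∈ Set.Icc (-1 : ℝ) 1,
          ‖R n k y‖ ≤ C * σb ^ (n - k) ∧ ‖R' n k y‖ ≤ C * σb ^ (n - k) := by
  have h1σ : (0:ℝ) < 1 - σb := by linarith
  refine ⟨1 / (1 - σb), by positivity, ?_⟩
  intro m hm εb hε0 hε2 R R' R'' σstep hDR hDR' hR0 hR'0 hσne hσle hrec hstep
  set C : ℝ := 1 / (1 - σb) with hC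
  have hIcc0 : (0:ℝ) ∈ Set.Icc (-1:ℝ) 1 := by norm_num
  have conv : Convex ℝ (Set.Icc (-1:ℝ) 1) := convex_Icc _ _
  -- one-step bound from the second derivative
  have step : ∀ n : ℕ, ∀ y ∈ Set.Icc (-1:ℝ) 1, ‖R' (n+1) n y‖ ≤ εb ^ (2^n) * |y| := by
    intro n y hy
    have h := conv.norm_image_sub_le_of_norm_hasDerivWithin_le
      (fun x hx => (hDR' (n+1) n x hx).hasDerivWithinAt)
      (fun x hx => hstep n x hx) hIcc0 hy
    simpa [hR'0, Real.norm_eq_abs] using h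
  have hεpow : ∀ n : ℕ, εb ^ (2^n) ≤ σb ^ (2*n+2) := by
    intro n
    calc εb ^ (2^n) ≤ (σb^2) ^ (2^n) := pow_le_pow_left₀ hε0.le hε2 _
      _ = σb ^ (2 * 2^n) := by rw [← pow_mul]
      _ ≤ σb ^ (2*n+2) := by
          apply pow_le_pow_of_le_one hσ0.le hσ1.le
          have := Nat.lt_two_pow_self (n := n)
          omega
  set B : ℕ → ℕ → ℝ := fun n k => σb^(n+1) * (σb^k - σb^n) / (1-σb) with hBdef
  have hBnonneg : ∀ n k : ℕ, k ≤ n → 0 ≤ B n k := by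
    intro n k hkn
    apply div_nonneg _ h1σ.le
    have h1 : σb^n ≤ σb^k := pow_le_pow_of_le_one hσ0.le hσ1.le hkn
    have h2 : (0:ℝ) ≤ σb^(n+1) := by positivity
    nlinarith
  have hbase : ∀ n : ℕ, B (n+1) n = σb ^ (2*n+2) := by
    intro n
    simp only [hBdef]
    field_simp
    ring
  have hstepeq : ∀ n k : ℕ, σb ^ (2*n+2) + σb * B n k = B (n+1) k := by
    intro n k
    simp only [hBdef]
    field_simp
    ring
  -- the main inductive bound on the first derivative
  have main : ∀ n : ℕ, ∀ k, k < n → ∀ y ∈ Set.Icc (-1:ℝ) 1, ‖R' n k y‖ ≤ B n k * |y| := by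
    intro n
    induction n with
    | zero => intro k hk; omega
    | succ n ih =>
      intro k hk
      rcases Nat.lt_succ_iff_lt_or_eq.mp hk with hk | hk'
      · -- k < n : use recursion, first on the open interval
        have hIoo : ∀ y ∈ Set.Ioo (-1:ℝ) 1, ‖R' (n+1) k y‖ ≤ B (n+1) k * |y| := by
          intro y hy
          have hyIcc : y ∈ Set.Icc (-1:ℝ) 1 := Set.Ioo_subset_Icc_self hy
          have hyabs : |y| ≤ 1 := abs_le.mpr ⟨hyIcc.1, hyIcc.2⟩
          have hσy : σstep n * y ∈ Set.Icc (-1:ℝ) 1 := by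
            have : |σstep n * y| ≤ 1 := by
              rw [abs_mul]
              calc |σstep n| * |y| ≤ σb * 1 :=
                    mul_le_mul (hσle n) hyabs (abs_nonneg _) hσ0.le
                _ ≤ 1 := by linarith
            exact ⟨(abs_le.mp this).1, (abs_le.mp this).2⟩
          have hinner : HasDerivAt (fun x => R n k (σstep n * x))
              (σstep n • R' n k (σstep n * y)) y := by
            have h1 : HasDerivAt (fun x : ℝ => σstep n * x) (σstep n) y := by
              simpa using (hasDerivAt_id y).const_mul (σstep n)
            exact (hDR n k _ hσy).scomp y h1
          have hRHS : HasDerivAt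
              (fun x => R (n+1) n x + (σstep n)⁻¹ • R n k (σstep n * x))
              (R' (n+1) n y + R' n k (σstep n * y)) y := by
            have h2 := (hDR (n+1) n y hyIcc).add (hinner.const_smul (σstep n)⁻¹)
            simp only [smul_smul, inv_mul_cancel₀ (hσne n), one_smul] at h2; exact h2
          have heq : R (n+1) k =ᶠ[nhds y]
              fun x => R (n+1) n x + (σstep n)⁻¹ • R n k (σstep n * x) := by
            filter_upwards [Ioo_mem_nhds hy.1 hy.2] with x hx
            exact hrec k n hk x (Set.Ioo_subset_Icc_self hx)
          have huniq : R' (n+1) k y = R' (n+1) n y + R' n k (σstep n * y) :=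
            (hDR (n+1) k y hyIcc).unique (hRHS.congr_of_eventuallyEq heq)
          rw [huniq]
          calc ‖R' (n+1) n y + R' n k (σstep n * y)‖
              ≤ ‖R' (n+1) n y‖ + ‖R' n k (σstep n * y)‖ := norm_add_le _ _
            _ ≤ εb^(2^n) * |y| + B n k * |σstep n * y| :=
                add_le_add (step n y hyIcc) (ih k hk _ hσy)
            _ ≤ σb^(2*n+2) * |y| + B n k * (σb * |y|) := by
                refine add_le_add (mul_le_mul_of_nonneg_right (hεpow n) (abs_nonneg y)) ?_
                refine mul_le_mul_of_nonneg_left ?_ (hBnonneg n k hk.le)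
                rw [abs_mul]
                exact mul_le_mul_of_nonneg_right (hσle n) (abs_nonneg y)
            _ = (σb^(2*n+2) + σb * B n k) * |y| := by ring
            _ = B (n+1) k * |y| := by rw [hstepeq]
        -- extend from Ioo to Icc by continuity
        intro y hy
        have hycl : y ∈ closure (Set.Ioo (-1:ℝ) 1) := by
          rw [closure_Ioo (by norm_num : (-1:ℝ) ≠ 1)]; exact hy
        have hne : (nhdsWithin y (Set.Ioo (-1:ℝ) 1)).NeBot :=
          mem_closure_iff_nhdsWithin_neBot.mp hycl
        have hcont : ContinuousAt (R' (n+1) k) y := (hDR' (n+1) k y hy).continuousAt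
        have t1 : Filter.Tendsto (fun x => ‖R' (n+1) k x‖)
            (nhdsWithin y (Set.Ioo (-1:ℝ) 1)) (nhds ‖R' (n+1) k y‖) :=
          (hcont.norm.tendsto).mono_left nhdsWithin_le_nhds
        have t2 : Filter.Tendsto (fun x => B (n+1) k * |x|)
            (nhdsWithin y (Set.Ioo (-1:ℝ) 1)) (nhds (B (n+1) k * |y|)) :=
          ((continuous_const.mul continuous_abs).tendsto y).mono_left nhdsWithin_le_nhds
        refine le_of_tendsto_of_tendsto t1 t2 ?_
        filter_upwards [self_mem_nhdsWithin] with x hx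
        exact hIoo x hx
      · -- k = n : one-step bound
        subst hk'
        intro y hy
        calc ‖R' (k+1) k y‖ ≤ εb^(2^k) * |y| := step k y hy
          _ ≤ σb^(2*k+2) * |y| := mul_le_mul_of_nonneg_right (hεpow k) (abs_nonneg y)
          _ = B (k+1) k * |y| := by rw [hbase]
  -- from B to C * σb^(n-k)
  have hBle : ∀ n k : ℕ, k < n → B n k ≤ C * σb ^ (n - k) := by
    intro n k hkn
    have h1 : σb^(n+1) * (σb^k - σb^n) ≤ σb ^ (n-k) := by
      have h2 : σb^(n+1) * (σb^k - σb^n) ≤ σb^(n+1) * σb^k := by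
        have : (0:ℝ) < σb^n := pow_pos hσ0 n
        nlinarith [pow_pos hσ0 (n+1)]
      calc σb^(n+1) * (σb^k - σb^n) ≤ σb^(n+1) * σb^k := h2
        _ = σb^(n+1+k) := by ring
        _ ≤ σb^(n-k) := pow_le_pow_of_le_one hσ0.le hσ1.le (by omega)
    have : B n k ≤ σb^(n-k) / (1-σb) := by
      simp only [hBdef]
      exact (div_le_div_iff_of_pos_right h1σ).mpr h1
    calc B n k ≤ σb^(n-k) / (1-σb) := this
      _ = C * σb^(n-k) := by rw [hC]; ring
  have final' : ∀ k n : ℕ, k < n → ∀ y ∈ Set.Icc (-1:ℝ) 1,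
      ‖R' n k y‖ ≤ C * σb ^ (n - k) := by
    intro k n hkn y hy
    have hyabs : |y| ≤ 1 := abs_le.mpr ⟨hy.1, hy.2⟩
    have h1 := main n k hkn y hy
    have h2 : B n k * |y| ≤ B n k * 1 :=
      mul_le_mul_of_nonneg_left hyabs (hBnonneg n k hkn.le)
    have h3 := hBle n k hkn
    linarith
  intro k n hkn y hy
  refine ⟨?_, final' k n hkn y hy⟩
  have hyabs : |y| ≤ 1 := abs_le.mpr ⟨hy.1, hy.2⟩
  have hCσ : (0:ℝ) ≤ C * σb ^ (n-k) := by positivity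
  have h := conv.norm_image_sub_le_of_norm_hasDerivWithin_le
    (fun x hx => (hDR n k x hx).hasDerivWithinAt)
    (fun x hx => final' k n hkn x hx) hIcc0 hy
  rw [hR0, sub_zero, sub_zero, Real.norm_eq_abs] at h
  nlinarith
end

section
/- Let m ≥ 1 and let k < n be integers. For k ≤ i ≤ n−1 let ψ_i : ℝ^{m+2} → ℝ^{m+2} be maps, σ_i ∈ ℝ scalars, and p_i : ℝ → ℝ^m functions such that for every w = (x,y,z): π_y(ψ_i(w)) = σ_i·y and π_z(ψ_i(w)) = σ_i·z + p_i(σ_i·y). Define Ψ^n_k = ψ_k ∘ ψ_{k+1} ∘ ⋯ ∘ ψ_{n−1}, and set σ_{i,k} = ∏_{j=k}^{i−1} σ_j (so σ_{k,k} = 1) and σ_{n,i} = ∏_{j=i}^{n−1} σ_j. Then for every w = (x,y,z): π_z(Ψ^n_k(w)) = σ_{n,k}·z + Σ_{i=k}^{n−1} σ_{i,k} · p_i(σ_{n,i}·y). -/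
/-- `compFrom ψ k j = ψ_k ∘ ψ_{k+1} ∘ ⋯ ∘ ψ_{k+j-1}`, so that
`Ψ^n_k = compFrom ψ k (n - k)`. -/
def compFrom {α : Type*} (ψ : ℕ → α → α) : ℕ → ℕ → α → α
  | _, 0 => id
  | k, j + 1 => ψ k ∘ compFrom ψ (k + 1) j

lemma compFrom_y_aux {m : ℕ} (ψ : ℕ → HenonSpace m → HenonSpace m) (σ : ℕ → ℝ) :
    ∀ j k : ℕ, (∀ i : ℕ, k ≤ i → i < k + j → ∀ w : HenonSpace m,
      (ψ i w).2.1 = σ i * w.2.1) →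
    ∀ w : HenonSpace m,
      (compFrom ψ k j w).2.1 = (∏ j' ∈ Finset.Ico k (k + j), σ j') * w.2.1 := by
  intro j
  induction j with
  | zero => intro k _ w; simp [compFrom]
  | succ j ih =>
    intro k hy w
    have h1 : compFrom ψ k (j + 1) w = ψ k (compFrom ψ (k + 1) j w) := rfl
    have h2 := ih (k + 1) (fun i hi hi' w => hy i (by omega) (by omega) w)
      w
    rw [h1, hy k (le_refl k) (by omega), h2,
      Finset.prod_eq_prod_Ico_succ_bot (by omega : k < k + (j+1)) σ]
    have : k + 1 + j = k + (j + 1) := by omega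
    rw [this]; ring

lemma compFrom_z_aux {m : ℕ} (ψ : ℕ → HenonSpace m → HenonSpace m) (σ : ℕ → ℝ)
    (p : ℕ → ℝ → Fin m → ℝ) :
    ∀ j k : ℕ,
    (∀ i : ℕ, k ≤ i → i < k + j → ∀ w : HenonSpace m, (ψ i w).2.1 = σ i * w.2.1) →
    (∀ i : ℕ, k ≤ i → i < k + j → ∀ w : HenonSpace m,
      (ψ i w).2.2 = σ i • w.2.2 + p i (σ i * w.2.1)) →
    ∀ w : HenonSpace m,
      (compFrom ψ k j w).2.2
        = (∏ j' ∈ Finset.Ico k (k + j), σ j') • w.2.2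
          + ∑ i ∈ Finset.Ico k (k + j),
              (∏ j' ∈ Finset.Ico k i, σ j') • p i ((∏ j' ∈ Finset.Ico i (k + j), σ j') * w.2.1) := by
  intro j
  induction j with
  | zero => intro k _ _ w; simp [compFrom]
  | succ j ih =>
    intro k hy hz w
    have h1 : compFrom ψ k (j + 1) w = ψ k (compFrom ψ (k + 1) j w) := rfl
    have hkj : k + 1 + j = k + (j + 1) := by omega
    have hyv := compFrom_y_aux ψ σ j (k + 1)
      (fun i hi hi' w => hy i (by omega) (by omega) w) w
    have hzv := ih (k + 1) (fun i hi hi' w => hy i (by omega) (by omega) w)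
      (fun i hi hi' w => hz i (by omega) (by omega) w) w
    rw [hkj] at hyv hzv
    rw [h1, hz k (le_refl k) (by omega), hzv, hyv]
    rw [Finset.prod_eq_prod_Ico_succ_bot (by omega : k < k + (j+1)) σ,
      Finset.sum_eq_sum_Ico_succ_bot (by omega : k < k + (j+1))]
    rw [smul_add, add_assoc]
    congr 1
    · rw [smul_smul]
    · rw [Finset.smul_sum, Finset.Ico_self, Finset.prod_empty, one_smul,
        Finset.prod_eq_prod_Ico_succ_bot (by omega : k < k + (j+1)) σ,
        mul_assoc, add_comm]
      congr 1
      refine Finset.sum_congr rfl fun i hi => ?_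
      simp only [Finset.mem_Ico] at hi
      rw [smul_smul, Finset.prod_eq_prod_Ico_succ_bot (by omega : k < i) σ]

/-- Closed formula for the `z`-coordinate of the composed scaling map `Ψ^n_k`
(Proposition 5.3, equations (5.8)–(5.9)). -/
theorem henon_z_coordinate_formula {m : ℕ} (hm : 1 ≤ m) (k n : ℕ) (hkn : k < n)
    (ψ : ℕ → HenonSpace m → HenonSpace m) (σ : ℕ → ℝ) (p : ℕ → ℝ → Fin m → ℝ)
    (hy : ∀ i : ℕ, k ≤ i → i ≤ n - 1 → ∀ w : HenonSpace m,
      (ψ i w).2.1 = σ i * w.2.1)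
    (hz : ∀ i : ℕ, k ≤ i → i ≤ n - 1 → ∀ w : HenonSpace m,
      (ψ i w).2.2 = σ i • w.2.2 + p i (σ i * w.2.1)) :
    ∀ w : HenonSpace m,
      (compFrom ψ k (n - k) w).2.2
        = (∏ j ∈ Finset.Ico k n, σ j) • w.2.2
          + ∑ i ∈ Finset.Ico k n,
              (∏ j ∈ Finset.Ico k i, σ j) • p i ((∏ j ∈ Finset.Ico i n, σ j) * w.2.1) := by
  intro w
  have hn : k + (n - k) = n := by omega
  have := compFrom_z_aux ψ σ p (n - k) k
    (fun i hi hi' w => hy i hi (by omega) w)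
    (fun i hi hi' w => hz i hi (by omega) w) w
  rw [hn] at this
  exact this
end

section
/- In the setting of the closed formula π_z(Ψ^n_k(w)) = σ_{n,k}·z + Σ_{i=k}^{n−1} σ_{i,k}·p_i(σ_{n,i}·y) (maps ψ_i with π_y(ψ_i(w)) = σ_i·y, π_z(ψ_i(w)) = σ_i·z + p_i(σ_i·y), Ψ^n_k = ψ_k ∘ ⋯ ∘ ψ_{n−1}, σ_{i,k} = ∏_{j=k}^{i−1}σ_j, σ_{n,i} = ∏_{j=i}^{n−1}σ_j), suppose additionally that each p_i is differentiable with derivative q_i, that σ_{n,k} = ∏_{j=k}^{n−1}σ_j ≠ 0, and that there are d_{n,k} ∈ ℝ^m and a differentiable R_{n,k} : ℝ → ℝ^m with π_z(Ψ^n_k(x,y,z)) = σ_{n,k}·[d_{n,k}·y + z + R_{n,k}(y)] for all (x,y,z). Then for every y ∈ ℝ: Σ_{i=k}^{n−1} q_i(σ_{n,i}·y) = d_{n,k} + R'_{n,k}(y). -/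
/-- Corollary 5.4 of the paper: `Σ_{i=k}^{n−1} q_i(σ_{n,i}·y) = d_{n,k} + R'_{n,k}(y)`. -/
theorem henon_sum_q_eq_d_add_R' {m : ℕ} (hm : 1 ≤ m) (k n : ℕ) (hkn : k < n)
    (ψ : ℕ → HenonSpace m → HenonSpace m) (σ : ℕ → ℝ) (p q : ℕ → ℝ → Fin m → ℝ)
    (hy : ∀ i : ℕ, k ≤ i → i ≤ n - 1 → ∀ w : HenonSpace m,
      (ψ i w).2.1 = σ i * w.2.1)
    (hz : ∀ i : ℕ, k ≤ i → i ≤ n - 1 → ∀ w : HenonSpace m,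
      (ψ i w).2.2 = σ i • w.2.2 + p i (σ i * w.2.1))
    (hq : ∀ (i : ℕ) (y : ℝ), HasDerivAt (p i) (q i y) y)
    (hσ : (∏ j ∈ Finset.Ico k n, σ j) ≠ 0)
    (d : Fin m → ℝ) (R R' : ℝ → Fin m → ℝ)
    (hR : ∀ y : ℝ, HasDerivAt R (R' y) y)
    (hform : ∀ w : HenonSpace m,
      (compFrom ψ k (n - k) w).2.2
        = (∏ j ∈ Finset.Ico k n, σ j) • (w.2.1 • d + w.2.2 + R w.2.1)) :
    ∀ y : ℝ,
      ∑ i ∈ Finset.Ico k n, q i ((∏ j ∈ Finset.Ico i n, σ j) * y) = d + R' y := by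
  intro y
  set c : ℝ := ∏ j ∈ Finset.Ico k n, σ j with hc
  -- y-coordinate lemma
  have hycoord : ∀ a, k ≤ a → a ≤ n → ∀ w : HenonSpace m,
      (compFrom ψ a (n - a) w).2.1 = (∏ j ∈ Finset.Ico a n, σ j) * w.2.1 := by
    intro a hka han
    induction' hna : n - a with j ih generalizing a
    · intro w
      have : a = n := by omega
      subst this
      simp [compFrom, hna, Finset.Ico_self]
    · intro w
      have ha' : a < n := by omega
      have h1 : n - (a + 1) = j := by omega
      have := ih (a + 1) (by omega) (by omega) h1 w
      simp only [compFrom, Function.comp_apply]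
      rw [hy a hka (by omega), this,
        Finset.prod_eq_prod_Ico_succ_bot ha' σ]
      ring
  -- derivative lemma
  have hderiv : ∀ a, k ≤ a → a ≤ n → ∀ y : ℝ,
      HasDerivAt (fun y : ℝ => (compFrom ψ a (n - a) ((0 : ℝ), y, (0 : Fin m → ℝ))).2.2)
        ((∏ j ∈ Finset.Ico a n, σ j) •
          ∑ i ∈ Finset.Ico a n, q i ((∏ j ∈ Finset.Ico i n, σ j) * y)) y := by
    intro a hka han
    induction' hna : n - a with j ih generalizing a
    · intro y
      have : a = n := by omega
      subst this
      simp only [hna, compFrom, id_eq, Finset.Ico_self, Finset.prod_empty,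
        Finset.sum_empty, one_smul]
      exact hasDerivAt_const y 0
    · intro y
      have ha' : a < n := by omega
      have h1 : n - (a + 1) = j := by omega
      set ca : ℝ := ∏ j ∈ Finset.Ico a n, σ j with hca
      have hprod : ca = σ a * ∏ j ∈ Finset.Ico (a + 1) n, σ j :=
        Finset.prod_eq_prod_Ico_succ_bot ha' σ
      have hfun : (fun y : ℝ => (compFrom ψ a (n - a) ((0 : ℝ), y, (0 : Fin m → ℝ))).2.2)
          = fun y : ℝ =>
            σ a • (compFrom ψ (a + 1) (n - (a + 1)) ((0 : ℝ), y, (0 : Fin m → ℝ))).2.2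
            + p a (ca * y) := by
        funext y
        have hrw : n - a = (n - (a + 1)) + 1 := by omega
        rw [hrw]
        simp only [compFrom, Function.comp_apply]
        rw [hz a hka (by omega), hycoord (a + 1) (by omega) (by omega), hprod]
        ring_nf
      rw [hna, h1] at hfun
      rw [hfun]
      have hinner := ih (a + 1) (by omega) (by omega) h1 y
      have hlin : HasDerivAt (fun y : ℝ => ca * y) ca y := by
        simpa using (hasDerivAt_id y).const_mul ca
      have hp : HasDerivAt (fun y : ℝ => p a (ca * y)) (ca • q a (ca * y)) y :=
        (hq a (ca * y)).scomp y hlin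
      have := (hinner.const_smul (σ a)).add hp
      convert this using 1
      · rfl
      · rfl
      · rfl
      · rfl
      rw [Finset.sum_eq_sum_Ico_succ_bot ha']
      rw [smul_add, smul_smul, ← hprod]
      abel
  -- two expressions for the derivative of the same function
  have hd1 := hderiv k le_rfl (le_of_lt hkn) y
  have hd2 : HasDerivAt (fun y : ℝ => (compFrom ψ k (n - k) ((0 : ℝ), y, (0 : Fin m → ℝ))).2.2)
      (c • (d + R' y)) y := by
    have hfun : (fun y : ℝ => (compFrom ψ k (n - k) ((0 : ℝ), y, (0 : Fin m → ℝ))).2.2)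
        = fun y : ℝ => c • (y • d + 0 + R y) := by
      funext y; exact hform ((0 : ℝ), y, (0 : Fin m → ℝ))
    rw [hfun]
    have h1 : HasDerivAt (fun y : ℝ => y • d + 0 + R y) (d + R' y) y := by
      have h0 := (((hasDerivAt_id y).smul_const d).add_const (0 : Fin m → ℝ)).add (hR y)
      simp only [one_smul] at h0
      exact h0
    exact h1.const_smul c
  have := hd1.unique hd2
  exact smul_right_injective (Fin m → ℝ) hσ this
end

section
/- Let X be a set, k < n integers, F_j : X → X maps for k ≤ j ≤ n and ψ^j_v : X → X bijections for k < j ≤ n with F_j = (ψ^j_v)⁻¹ ∘ F_{j−1} ∘ F_{j−1} ∘ ψ^j_v, and set ψ^j_c = F_{j−1} ∘ ψ^j_v, Ψ^n_{k,v} = ψ^{k+1}_v ∘ ⋯ ∘ ψ^n_v, Ψ^n_{k,c} = ψ^{k+1}_c ∘ ⋯ ∘ ψ^n_c. Suppose F_k is injective, and suppose τ_k, τ_n, c_k, c_n ∈ X satisfy Ψ^n_{k,v}(τ_n) = τ_k, F_n(c_n) = τ_n and F_k(c_k) = τ_k. Then Ψ^n_{k,c}(c_n) = c_k. -/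
/-- Corollary B.2 of the paper: the critical points satisfy `c_{F_k} = Ψ^n_{k,c}(c_{F_n})`. -/
theorem henon_critical_point_image {X : Type*} (k n : ℕ) (hkn : k < n)
    (F : ℕ → X → X) (ψv : ℕ → X ≃ X)
    (hF : ∀ j : ℕ, k < j → j ≤ n →
      F j = ⇑(ψv j).symm ∘ F (j - 1) ∘ F (j - 1) ∘ ⇑(ψv j))
    (ψc : ℕ → X → X)
    (hψc : ∀ j : ℕ, ψc j = F (j - 1) ∘ ⇑(ψv j))
    (hinj : Function.Injective (F k))
    (τk τn ck cn : X)
    (hτ : iterComp (fun j => ⇑(ψv j)) k (n - k) τn = τk)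
    (hcn : F n cn = τn)
    (hck : F k ck = τk) :
    iterComp ψc k (n - k) cn = ck := by
  have key : ∀ m : ℕ, k + m ≤ n → ∀ x : X,
      F k (iterComp ψc k m x) = iterComp (fun j => ⇑(ψv j)) k m (F (k + m) x) := by
    intro m
    induction m with
    | zero => intro _ x; simp [iterComp]
    | succ m ih =>
      intro hm x
      have hm' : k + m ≤ n := by omega
      have hj : k < k + m + 1 := by omega
      have hstep : F (k + m) (ψc (k + m + 1) x)
          = (ψv (k + m + 1)) (F (k + m + 1) x) := by
        have h1 := hψc (k + m + 1)
        have h2 := hF (k + m + 1) hj hm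
        simp only [Nat.add_sub_cancel] at h1 h2
        rw [h1, h2]
        simp [Function.comp]
      simp only [iterComp, Function.comp_apply]
      rw [ih hm' (ψc (k + m + 1) x), hstep]; rfl
  have h := key (n - k) (by omega) cn
  have hn : k + (n - k) = n := by omega
  rw [hn, hcn, hτ, ← hck] at h
  exact hinj h
end

section
/- Let σ, b₁, b̃₁ ∈ (0,1) with b₁ > b̃₁, let C > 0 and α > 0. Suppose there are infinitely many positive integers k such that σ^k · b̃₁^{2^k} · b₁^{2^k} ≤ C · (σ^k · b̃₁^{2^k} · b̃₁^{2^k})^α. Then α ≤ (1/2)·(1 + log b₁ / log b̃₁). -/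
open Real Filter

/-- Quantitative core of the non-rigidity theorem: if along infinitely many scales `k` the
Hölder inequality `σ^k·b̃₁^{2^k}·b₁^{2^k} ≤ C·(σ^k·b̃₁^{2^k}·b̃₁^{2^k})^α` holds with
`b₁ > b̃₁`, then `α ≤ (1/2)(1 + log b₁ / log b̃₁)`. -/
theorem henon_nonrigidity_holder_bound (σ b₁ bt₁ C α : ℝ)
    (hσ : σ ∈ Set.Ioo (0 : ℝ) 1)
    (hb₁ : b₁ ∈ Set.Ioo (0 : ℝ) 1)
    (hbt₁ : bt₁ ∈ Set.Ioo (0 : ℝ) 1)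
    (hlt : bt₁ < b₁)
    (hC : 0 < C) (hα : 0 < α)
    (hinf : {k : ℕ | 0 < k ∧
        σ ^ k * bt₁ ^ (2 ^ k) * b₁ ^ (2 ^ k)
          ≤ C * (σ ^ k * bt₁ ^ (2 ^ k) * bt₁ ^ (2 ^ k)) ^ α}.Infinite) :
    α ≤ (1 / 2) * (1 + Real.log b₁ / Real.log bt₁) := by
  obtain ⟨hσ0, hσ1⟩ := hσ
  obtain ⟨hb0, hb1⟩ := hb₁
  obtain ⟨ht0, ht1⟩ := hbt₁
  have hltneg : Real.log bt₁ < 0 := Real.log_neg ht0 ht1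
  set lσ := Real.log σ with hlσ
  set lb := Real.log b₁ with hlb
  set lt := Real.log bt₁ with hltd
  -- key log-inequality along the infinite set of scales
  have key : ∀ k ∈ {k : ℕ | 0 < k ∧
      σ ^ k * bt₁ ^ (2 ^ k) * b₁ ^ (2 ^ k)
        ≤ C * (σ ^ k * bt₁ ^ (2 ^ k) * bt₁ ^ (2 ^ k)) ^ α},
      (2 : ℝ) ^ k * (lt + lb - 2 * α * lt) ≤ Real.log C + (α - 1) * (k * lσ) := by
    intro k hk
    obtain ⟨-, hk2⟩ := hk
    have hσk : (0:ℝ) < σ ^ k := pow_pos hσ0 k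
    have htk : (0:ℝ) < bt₁ ^ (2 ^ k) := pow_pos ht0 _
    have hbk : (0:ℝ) < b₁ ^ (2 ^ k) := pow_pos hb0 _
    have hX : (0:ℝ) < σ ^ k * bt₁ ^ (2 ^ k) * b₁ ^ (2 ^ k) := by positivity
    have hY : (0:ℝ) < σ ^ k * bt₁ ^ (2 ^ k) * bt₁ ^ (2 ^ k) := by positivity
    have hlog : Real.log (σ ^ k * bt₁ ^ (2 ^ k) * b₁ ^ (2 ^ k))
        ≤ Real.log (C * (σ ^ k * bt₁ ^ (2 ^ k) * bt₁ ^ (2 ^ k)) ^ α) :=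
      Real.log_le_log hX hk2
    rw [Real.log_mul hC.ne' (Real.rpow_pos_of_pos hY α).ne',
        Real.log_rpow hY,
        Real.log_mul (mul_pos hσk htk).ne' hbk.ne',
        Real.log_mul (mul_pos hσk htk).ne' htk.ne',
        Real.log_mul hσk.ne' htk.ne',
        Real.log_pow, Real.log_pow, Real.log_pow] at hlog
    push_cast at hlog
    linarith [hlog]
  -- conclude: lt + lb - 2α lt ≤ 0
  have hc : lt + lb - 2 * α * lt ≤ 0 := by
    by_contra h
    push_neg at h
    set c := lt + lb - 2 * α * lt with hcdef
    have hlim : Tendsto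
        (fun k : ℕ => |Real.log C| * (1/2 : ℝ) ^ k + |α - 1| * |lσ| * (k * (1/2 : ℝ) ^ k))
        atTop (nhds 0) := by
      have h1 : Tendsto (fun k : ℕ => (1/2 : ℝ) ^ k) atTop (nhds 0) :=
        tendsto_pow_atTop_nhds_zero_of_lt_one (by norm_num) (by norm_num)
      have h2 : Tendsto (fun k : ℕ => (k : ℝ) * (1/2 : ℝ) ^ k) atTop (nhds 0) :=
        tendsto_self_mul_const_pow_of_lt_one (by norm_num) (by norm_num)
      have := (h1.const_mul |Real.log C|).add (h2.const_mul (|α - 1| * |lσ|))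
      simpa using this
    have hev : ∀ᶠ k : ℕ in atTop,
        |Real.log C| * (1/2 : ℝ) ^ k + |α - 1| * |lσ| * (k * (1/2 : ℝ) ^ k) < c :=
      hlim.eventually_lt_const h
    obtain ⟨N, hN⟩ := eventually_atTop.1 hev
    obtain ⟨k, hkS, hkN⟩ := hinf.exists_gt N
    have hkey := key k hkS
    have h2k : (0:ℝ) < 2 ^ k := by positivity
    have e1 : (1/2 : ℝ) ^ k * 2 ^ k = 1 := by
      rw [← mul_pow]; norm_num
    have hNk := hN k hkN.le
    have hmul := mul_lt_mul_of_pos_right hNk h2k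
    have hub : Real.log C + (α - 1) * ((k:ℝ) * lσ) ≤ |Real.log C| + |α - 1| * |lσ| * k := by
      have h1 := le_abs_self (Real.log C)
      have h2 : (α - 1) * lσ ≤ |α - 1| * |lσ| := by
        rw [← abs_mul]; exact le_abs_self _
      have h3 := mul_le_mul_of_nonneg_right h2 (Nat.cast_nonneg k : (0:ℝ) ≤ k)
      linarith
    have expand : (|Real.log C| * (1/2 : ℝ) ^ k + |α - 1| * |lσ| * ((k:ℝ) * (1/2 : ℝ) ^ k)) * 2 ^ k
        = |Real.log C| * ((1/2 : ℝ) ^ k * 2 ^ k)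
          + |α - 1| * |lσ| * (k:ℝ) * ((1/2 : ℝ) ^ k * 2 ^ k) := by ring
    rw [expand, e1, mul_one, mul_one] at hmul
    linarith [hkey, hub, hmul]
  -- from the linear inequality derive the bound on α
  have h2α : 2 * α ≤ (lt + lb) / lt := by
    rw [le_div_iff_of_neg hltneg]
    linarith [hc]
  have heq : (lt + lb) / lt = 1 + lb / lt := by
    field_simp [hltneg.ne]
  linarith [heq ▸ h2α]
end

section
/- Given real numbers 0 < A₀ < A₁, 0 < σ < 1 and p ≥ 2, the set of parameters b ∈ [0,1] for which there are infinitely many pairs of integers 0 < k < n satisfying A₀ < b^{p^k}/σ^{n−k} < A₁ is a dense G_δ subset of [0,1] of full Lebesgue measure. -/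
open MeasureTheory

/-- The set of parameters `b ∈ [0,1]` admitting infinitely many pairs `0 < k < n` with
`A₀ < b^{p^k}/σ^{n−k} < A₁`. -/
def hlmParamSet (A₀ A₁ σ p : ℝ) : Set ℝ :=
  {b : ℝ | b ∈ Set.Icc (0 : ℝ) 1 ∧
    {kn : ℕ × ℕ | 0 < kn.1 ∧ kn.1 < kn.2 ∧
      A₀ < b ^ (p ^ kn.1) / σ ^ (kn.2 - kn.1) ∧
      b ^ (p ^ kn.1) / σ ^ (kn.2 - kn.1) < A₁}.Infinite}

open Metric Filter Set Topology ENNReal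

lemma hlm_null_bad (p L a ℓ c : ℝ) (K : ℕ) (hp : 2 ≤ p) (hL : 0 < L)
    (hℓ0 : 0 < ℓ) (hℓL : ℓ ≤ L / 2) (hc : 0 < c) :
    volume {x : ℝ | c ≤ x ∧ ∀ k : ℕ, K ≤ k → ∀ m : ℕ, 1 ≤ m →
      p ^ k * x ∉ Set.Ioo ((m : ℝ) * L - (a + ℓ)) ((m : ℝ) * L - a)} = 0 := by
  set B := {x : ℝ | c ≤ x ∧ ∀ k : ℕ, K ≤ k → ∀ m : ℕ, 1 ≤ m →
      p ^ k * x ∉ Set.Ioo ((m : ℝ) * L - (a + ℓ)) ((m : ℝ) * L - a)} with hBdef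
  have hp1 : (1 : ℝ) < p := lt_of_lt_of_le one_lt_two hp
  have hp0 : (0 : ℝ) < p := lt_trans one_pos hp1
  have hpk : ∀ k : ℕ, (0:ℝ) < p ^ k := fun k => pow_pos hp0 k
  -- B is closed, hence measurable
  have hBclosed : IsClosed B := by
    have : B = Set.Ici c ∩ ⋂ (k : ℕ), ⋂ (_ : K ≤ k), ⋂ (m : ℕ), ⋂ (_ : 1 ≤ m),
        (fun x : ℝ => p ^ k * x) ⁻¹' (Set.Ioo ((m : ℝ) * L - (a + ℓ)) ((m : ℝ) * L - a))ᶜ := by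
      ext x
      simp [hBdef, Set.mem_iInter, Set.mem_Ici]
    rw [this]
    exact isClosed_Ici.inter (isClosed_iInter fun k => isClosed_iInter fun _ =>
      isClosed_iInter fun m => isClosed_iInter fun _ =>
        (isOpen_Ioo.isClosed_compl).preimage (continuous_const.mul continuous_id))
  by_contra hB
  -- choose K' ≥ K with p^K' * c large
  obtain ⟨K₀, hK₀⟩ := pow_unbounded_of_one_lt ((L + |a| + 1) / c) (one_lt_two (α := ℝ))
  set K' : ℕ := max K K₀ with hK'def
  have hpow2 : ∀ k : ℕ, (2:ℝ) ^ k ≤ p ^ k := fun k => pow_le_pow_left₀ (by norm_num) hp k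
  have hK'c : L + |a| + 1 ≤ p ^ K' * c := by
    have h1 : (L + |a| + 1) / c < 2 ^ K₀ := hK₀
    have h2 : (2:ℝ) ^ K₀ ≤ 2 ^ K' := pow_le_pow_right₀ one_le_two (le_max_right _ _)
    have := (div_lt_iff₀ hc).1 h1
    nlinarith [hpow2 K']
  -- big values for k ≥ K'
  have hbig : ∀ k : ℕ, K' ≤ k → ∀ x : ℝ, c ≤ x → L + |a| + 1 ≤ p ^ k * x := by
    intro k hk x hx
    have h1 : p ^ K' ≤ p ^ k := pow_le_pow_right₀ hp1.le hk
    calc L + |a| + 1 ≤ p ^ K' * c := hK'c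
    _ ≤ p ^ k * x := mul_le_mul h1 hx hc.le (hpk k).le
  -- density point argument
  have hres : (volume.restrict B) ≠ 0 := by
    simpa [Measure.restrict_eq_zero] using hB
  have hae := Besicovitch.ae_tendsto_measure_inter_div_of_measurableSet
      (volume : Measure ℝ) hBclosed.measurableSet
  have hae2 : ∀ᵐ x ∂(volume.restrict B), x ∈ B ∧
      Tendsto (fun r => volume (B ∩ closedBall x r) / volume (closedBall x r)) (𝓝[>] 0)
        (𝓝 (B.indicator 1 x)) :=
    (ae_restrict_mem hBclosed.measurableSet).and (ae_restrict_of_ae hae)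
  have : NeBot (ae (volume.restrict B)) := ae_neBot.2 hres
  obtain ⟨x, hxB, hxt⟩ := hae2.exists
  have hxt' : Tendsto (fun r => volume (B ∩ closedBall x r) / volume (closedBall x r))
      (𝓝[>] 0) (𝓝 1) := by
    rw [Set.indicator_of_mem hxB] at hxt
    simpa using hxt
  -- sequence of radii
  set r : ℕ → ℝ := fun k => L / p ^ k with hrdef
  have hr0 : ∀ k, 0 < r k := fun k => div_pos hL (hpk k)
  have hrt : Tendsto r atTop (𝓝[>] 0) := by
    apply tendsto_nhdsWithin_of_tendsto_nhds_of_eventually_within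
    · have h1 : Tendsto (fun k : ℕ => (p⁻¹) ^ k) atTop (𝓝 0) :=
        tendsto_pow_atTop_nhds_zero_of_lt_one (by positivity) (by
          rw [inv_lt_one_iff₀]; right; exact hp1)
      have := h1.const_mul L
      simpa [hrdef, div_eq_mul_inv, inv_pow] using this
    · exact Eventually.of_forall fun k => hr0 k
  have htd : Tendsto (fun k => volume (B ∩ closedBall x (r k)) / volume (closedBall x (r k)))
      atTop (𝓝 1) := hxt'.comp hrt
  -- the key estimate
  have hkey : ∀ k : ℕ, K' ≤ k →
      volume (B ∩ closedBall x (r k)) / volume (closedBall x (r k))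
        ≤ ENNReal.ofReal (1 - ℓ / (2 * L)) := by
    intro k hk
    set T := r k with hTdef
    have hT : 0 < T := hr0 k
    have hpkT : p ^ k * T = L := by
      rw [hTdef, hrdef]; field_simp
    have hxc : c ≤ x := hxB.1
    have hPx : L + |a| + 1 ≤ p ^ k * x := hbig k hk x hxc
    set m' : ℤ := ⌈(p ^ k * (x - T) + a + ℓ) / L⌉ with hm'def
    have hm'pos : 0 < m' := by
      apply Int.ceil_pos.2
      apply div_pos _ hL
      have : p ^ k * (x - T) = p ^ k * x - L := by rw [mul_sub, hpkT]
      rw [this]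
      have := abs_nonneg a
      have := neg_abs_le a
      nlinarith
    have hceil1 : (p ^ k * (x - T) + a + ℓ) / L ≤ (m' : ℝ) := Int.le_ceil _
    have hceil2 : (m' : ℝ) < (p ^ k * (x - T) + a + ℓ) / L + 1 := Int.ceil_lt_add_one _
    have hle1 : p ^ k * (x - T) + a + ℓ ≤ (m' : ℝ) * L := by
      have := (div_le_iff₀ hL).1 hceil1
      linarith
    have hle2 : (m' : ℝ) * L < p ^ k * (x - T) + a + ℓ + L := by
      have h := mul_lt_mul_of_pos_right hceil2 hL
      have h2 : ((p ^ k * (x - T) + a + ℓ) / L + 1) * L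
          = p ^ k * (x - T) + a + ℓ + L := by field_simp
      rw [h2] at h
      exact h
    set g₁ : ℝ := ((m' : ℝ) * L - (a + ℓ)) / p ^ k with hg₁def
    set g₂ : ℝ := ((m' : ℝ) * L - a) / p ^ k with hg₂def
    have hmul : p ^ k * (x - T) = p ^ k * x - L := by rw [mul_sub, hpkT]
    have hg₁lb : x - T ≤ g₁ := by
      rw [hg₁def, le_div_iff₀ (hpk k)]
      nlinarith [hle1]
    have hg₂ub : g₂ ≤ x + T := by
      rw [hg₂def, div_le_iff₀ (hpk k)]
      have : p ^ k * (x + T) = p ^ k * x + L := by rw [mul_add, hpkT]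
      nlinarith [hle2]
    have hgap : g₂ - g₁ = ℓ / p ^ k := by
      rw [hg₁def, hg₂def, div_sub_div_same]
      congr 1
      ring
    -- B misses the open gap
    have hmiss : B ∩ Set.Ioo g₁ g₂ = ∅ := by
      ext y
      simp only [Set.mem_inter_iff, Set.mem_Ioo, Set.mem_empty_iff_false, iff_false, not_and]
      intro hyB h1 h2
      have hKk : K ≤ k := le_trans (le_max_left _ _) hk
      set m : ℕ := m'.toNat with hmdef
      have hm1 : 1 ≤ m := by omega
      have hmcast : (m : ℝ) = (m' : ℝ) := by
        rw [hmdef]; exact_mod_cast congrArg Int.cast (Int.toNat_of_nonneg hm'pos.le)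
      apply hyB.2 k hKk m hm1
      rw [hmcast]
      constructor
      · rw [hg₁def, div_lt_iff₀ (hpk k)] at h1; linarith [h1]
      · rw [hg₂def, lt_div_iff₀ (hpk k)] at h2; linarith [h2]
    -- measure bound
    have hsub : B ∩ closedBall x T ⊆ Set.Icc (x - T) g₁ ∪ Set.Icc g₂ (x + T) := by
      intro y hy
      have hy1 : y ∈ Set.Icc (x - T) (x + T) := by
        rw [← Real.closedBall_eq_Icc]; exact hy.2
      have hy2 : y ∉ Set.Ioo g₁ g₂ := by
        intro h
        have : y ∈ B ∩ Set.Ioo g₁ g₂ := ⟨hy.1, h⟩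
        rw [hmiss] at this; exact this
      by_cases hcase : y ≤ g₁
      · exact Or.inl ⟨hy1.1, hcase⟩
      · refine Or.inr ⟨?_, hy1.2⟩
        by_contra h
        exact hy2 ⟨lt_of_not_ge hcase, lt_of_not_ge h⟩
    have hnum : volume (B ∩ closedBall x T) ≤ ENNReal.ofReal (2 * T - ℓ / p ^ k) := by
      refine le_trans (measure_mono hsub) (le_trans (measure_union_le _ _) ?_)
      rw [Real.volume_Icc, Real.volume_Icc]
      rw [← ENNReal.ofReal_add (by linarith) (by linarith)]
      apply ENNReal.ofReal_le_ofReal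
      linarith [hgap]
    have hden : volume (closedBall x T) = ENNReal.ofReal (2 * T) := Real.volume_closedBall x T
    rw [hden]
    refine le_trans (ENNReal.div_le_div_right hnum _) ?_
    rw [← ENNReal.ofReal_div_of_pos (by linarith)]
    apply ENNReal.ofReal_le_ofReal
    have hTval : T = L / p ^ k := rfl
    rw [hTval]
    rw [div_le_iff₀ (by positivity)]
    field_simp
    exact le_refl _
  -- contradiction
  have hq1 : ENNReal.ofReal (1 - ℓ / (2 * L)) < 1 := by
    rw [ENNReal.ofReal_lt_one]
    have : 0 < ℓ / (2 * L) := by positivity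
    linarith
  have hev : ∀ᶠ k in atTop,
      ENNReal.ofReal (1 - ℓ / (2 * L)) <
        volume (B ∩ closedBall x (r k)) / volume (closedBall x (r k)) :=
    htd.eventually (eventually_gt_nhds hq1)
  obtain ⟨k, hk1, hk2⟩ := (hev.and (eventually_ge_atTop K')).exists
  exact absurd (hkey k hk2) (not_le.2 hk1)

lemma hlm_exp_neg_lip : LipschitzOnWith 1 (fun x : ℝ => Real.exp (-x)) (Set.Ici 0) := by
  have key : ∀ x ∈ Set.Ici (0:ℝ), ∀ y ∈ Set.Ici (0:ℝ), y ≤ x →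
      |Real.exp (-x) - Real.exp (-y)| ≤ |x - y| := by
    intro x hx y hy hxy
    have h1 : Real.exp (-x) ≤ Real.exp (-y) := Real.exp_le_exp.2 (by linarith)
    have h2 : Real.exp (-y) ≤ 1 := Real.exp_le_one_iff.2 (by simpa using hy)
    have h3 : Real.exp (-x) = Real.exp (-y) * Real.exp (y - x) := by
      rw [← Real.exp_add]; ring_nf
    have h4 : y - x + 1 ≤ Real.exp (y - x) := Real.add_one_le_exp _
    have h5 : 0 < Real.exp (-y) := Real.exp_pos _
    rw [abs_of_nonpos (by linarith), abs_of_nonneg (by linarith)]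
    nlinarith
  apply LipschitzOnWith.of_dist_le_mul
  intro x hx y hy
  rw [Real.dist_eq, Real.dist_eq, NNReal.coe_one, one_mul]
  rcases le_total y x with h | h
  · exact key x hx y hy h
  · rw [abs_sub_comm, abs_sub_comm x y]
    exact key y hy x hx h

/-- Auxiliary open sets: parameters admitting a pair `(k, n)` with `k ≥ N`. -/
def hlmV (A₀ A₁ σ p : ℝ) (N : ℕ) : Set ℝ :=
  {b : ℝ | ∃ k n : ℕ, N ≤ k ∧ 0 < k ∧ k < n ∧
    A₀ < b ^ (p ^ k) / σ ^ (n - k) ∧ b ^ (p ^ k) / σ ^ (n - k) < A₁}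

lemma hlmV_open (A₀ A₁ σ p : ℝ) (hp : 2 ≤ p) (N : ℕ) : IsOpen (hlmV A₀ A₁ σ p N) := by
  have hp0 : (0:ℝ) < p := lt_of_lt_of_le two_pos hp
  have heq : hlmV A₀ A₁ σ p N = ⋃ (k : ℕ) (n : ℕ) (_ : N ≤ k ∧ 0 < k ∧ k < n),
      (fun b : ℝ => b ^ (p ^ k) / σ ^ (n - k)) ⁻¹' (Set.Ioo A₀ A₁) := by
    ext b
    simp only [hlmV, Set.mem_setOf_eq, Set.mem_iUnion, Set.mem_preimage, Set.mem_Ioo]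
    constructor
    · rintro ⟨k, n, h1, h2, h3, h4, h5⟩; exact ⟨k, n, ⟨h1, h2, h3⟩, h4, h5⟩
    · rintro ⟨k, n, ⟨h1, h2, h3⟩, h4, h5⟩; exact ⟨k, n, h1, h2, h3, h4, h5⟩
  rw [heq]
  refine isOpen_iUnion fun k => isOpen_iUnion fun n => isOpen_iUnion fun _ => ?_
  exact IsOpen.preimage
    ((Real.continuous_rpow_const (le_of_lt (pow_pos hp0 k))).div_const _) isOpen_Ioo

lemma hlm_gap_to_Q (A₀ A₁ σ : ℝ) (hA₀ : 0 < A₀) (hA₁ : 0 < A₁) (hσ0 : 0 < σ)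
    (t : ℝ) (m : ℕ)
    (h : t ∈ Set.Ioo ((m:ℝ) * (-Real.log σ) - Real.log A₁)
        ((m:ℝ) * (-Real.log σ) - Real.log A₀)) :
    A₀ < Real.exp (-t) / σ ^ m ∧ Real.exp (-t) / σ ^ m < A₁ := by
  have hσm : (0:ℝ) < σ ^ m := pow_pos hσ0 m
  have hlog0 : Real.log (A₀ * σ ^ m) = Real.log A₀ + (m:ℝ) * Real.log σ := by
    rw [Real.log_mul (ne_of_gt hA₀) (ne_of_gt hσm), Real.log_pow]
  have hlog1 : Real.log (A₁ * σ ^ m) = Real.log A₁ + (m:ℝ) * Real.log σ := by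
    rw [Real.log_mul (ne_of_gt hA₁) (ne_of_gt hσm), Real.log_pow]
  obtain ⟨h1, h2⟩ := h
  constructor
  · rw [lt_div_iff₀ hσm]
    have hkey : Real.log (A₀ * σ ^ m) < -t := by rw [hlog0]; linarith
    calc A₀ * σ ^ m = Real.exp (Real.log (A₀ * σ ^ m)) :=
          (Real.exp_log (mul_pos hA₀ hσm)).symm
    _ < Real.exp (-t) := Real.exp_lt_exp.2 hkey
  · rw [div_lt_iff₀ hσm]
    have hkey : -t < Real.log (A₁ * σ ^ m) := by rw [hlog1]; linarith
    calc Real.exp (-t) < Real.exp (Real.log (A₁ * σ ^ m)) := Real.exp_lt_exp.2 hkey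
    _ = A₁ * σ ^ m := Real.exp_log (mul_pos hA₁ hσm)

lemma hlm_exp_rpow (x : ℝ) (c : ℝ) : Real.exp (-x) ^ c = Real.exp (-(c * x)) := by
  rw [Real.rpow_def_of_pos (Real.exp_pos _), Real.log_exp]
  congr 1
  ring

/-- The complement of `hlmV` in `[0,1]` is Lebesgue-null. -/
lemma hlmV_compl_null (A₀ A₁ σ p : ℝ)
    (hA₀ : 0 < A₀) (hA : A₀ < A₁) (hσ0 : 0 < σ) (hσ1 : σ < 1) (hp : 2 ≤ p) (N : ℕ) :
    volume (Set.Icc (0:ℝ) 1 \ hlmV A₀ A₁ σ p N) = 0 := by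
  have hA₁ : 0 < A₁ := hA₀.trans hA
  set L : ℝ := -Real.log σ with hLdef
  have hL : 0 < L := by
    have := Real.log_neg hσ0 hσ1
    simp only [hLdef]; linarith
  set a : ℝ := Real.log A₀ with hadef
  set a₁ : ℝ := Real.log A₁ with ha₁def
  have ha₁a : a < a₁ := Real.log_lt_log hA₀ hA
  set ℓ : ℝ := min (a₁ - a) (L / 2) with hℓdef
  have hℓ0 : 0 < ℓ := lt_min (by linarith) (by linarith)
  have hℓL : ℓ ≤ L / 2 := min_le_right _ _
  have hℓa : a + ℓ ≤ a₁ := by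
    have := min_le_left (a₁ - a) (L / 2)
    simp only [hℓdef]; linarith [min_le_left (a₁ - a) (L / 2)]
  set W : Set ℝ := {x : ℝ | 0 < x ∧ Real.exp (-x) ∉ hlmV A₀ A₁ σ p N} with hWdef
  -- W is contained in a countable union of null "bad" sets
  have hW0 : volume W = 0 := by
    have hWsub : W ⊆ ⋃ j : ℕ, {x : ℝ | 1 / ((j:ℝ) + 1) ≤ x ∧
        ∀ k : ℕ, max N 1 ≤ k → ∀ m : ℕ, 1 ≤ m →
          p ^ k * x ∉ Set.Ioo ((m : ℝ) * L - (a + ℓ)) ((m : ℝ) * L - a)} := by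
      rintro x ⟨hx0, hxV⟩
      obtain ⟨j, hj⟩ := exists_nat_one_div_lt hx0
      refine Set.mem_iUnion.2 ⟨j, hj.le, ?_⟩
      intro k hk m hm hmem
      apply hxV
      have hmem' : p ^ k * x ∈ Set.Ioo ((m:ℝ) * L - a₁) ((m:ℝ) * L - a) :=
        ⟨by linarith [hmem.1], hmem.2⟩
      obtain ⟨hQ1, hQ2⟩ := hlm_gap_to_Q A₀ A₁ σ hA₀ hA₁ hσ0 (p ^ k * x) m hmem'
      rw [← hlm_exp_rpow x (p ^ k)] at hQ1 hQ2
      refine ⟨k, k + m, le_trans (le_max_left N 1) hk, ?_, by omega, ?_, ?_⟩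
      · have := le_trans (le_max_right N 1) hk; omega
      · rwa [Nat.add_sub_cancel_left]
      · rwa [Nat.add_sub_cancel_left]
    exact measure_mono_null hWsub (measure_iUnion_null fun j =>
        hlm_null_bad p L a ℓ (1 / ((j:ℝ) + 1)) (max N 1) hp hL hℓ0 hℓL (by positivity))
  -- push forward by the Lipschitz map x ↦ exp (-x)
  have himg : volume ((fun x : ℝ => Real.exp (-x)) '' W) = 0 := by
    have hlip : LipschitzOnWith 1 (fun x : ℝ => Real.exp (-x)) W :=
      hlm_exp_neg_lip.mono (fun x hx => le_of_lt hx.1)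
    have h1 := hlip.hausdorffMeasure_image_le (d := 1) zero_le_one
    rw [MeasureTheory.hausdorffMeasure_real] at h1
    simpa [hW0] using h1
  have hsub2 : Set.Icc (0:ℝ) 1 \ hlmV A₀ A₁ σ p N ⊆
      ({0, 1} : Set ℝ) ∪ (fun x : ℝ => Real.exp (-x)) '' W := by
    rintro b ⟨hb1, hb2⟩
    rcases eq_or_lt_of_le hb1.1 with h0 | h0
    · exact Or.inl (Or.inl h0.symm)
    rcases eq_or_lt_of_le hb1.2 with h1 | h1
    · exact Or.inl (Or.inr h1)
    refine Or.inr ⟨-Real.log b, ⟨?_, ?_⟩, ?_⟩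
    · have := Real.log_neg h0 h1; linarith
    · show Real.exp (- -Real.log b) ∉ _
      rw [neg_neg, Real.exp_log h0]; exact hb2
    · show Real.exp (- -Real.log b) = b
      rw [neg_neg, Real.exp_log h0]
  refine measure_mono_null hsub2 (measure_union_null ?_ himg)
  exact Set.Countable.measure_zero ((Set.countable_singleton 1).insert 0) _

lemma hlmParamSet_eq (A₀ A₁ σ p : ℝ)
    (hA₀ : 0 < A₀) (hA : A₀ < A₁) (hσ0 : 0 < σ) (hσ1 : σ < 1) (hp : 2 ≤ p) :
    hlmParamSet A₀ A₁ σ p = Set.Icc (0:ℝ) 1 ∩ ⋂ N, hlmV A₀ A₁ σ p N := by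
  have hA₁ : 0 < A₁ := hA₀.trans hA
  have hp1 : (1:ℝ) < p := lt_of_lt_of_le one_lt_two hp
  have hp0 : (0:ℝ) < p := lt_trans one_pos hp1
  ext b
  simp only [hlmParamSet, Set.mem_setOf_eq, Set.mem_inter_iff, Set.mem_iInter]
  constructor
  · rintro ⟨hb1, hb2⟩
    refine ⟨hb1, fun N => ?_⟩
    by_contra hcon
    rcases eq_or_lt_of_le hb1.1 with h0 | h0
    · obtain ⟨kn, h1, h2, h3, h4⟩ := hb2.nonempty
      rw [← h0, Real.zero_rpow (ne_of_gt (pow_pos hp0 kn.1))] at h3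
      simp only [zero_div] at h3
      linarith
    · set cb : ℝ := b ^ (p ^ N : ℝ) with hcbdef
      have hcb : 0 < cb := Real.rpow_pos_of_pos h0 _
      have hσm : Tendsto (fun m : ℕ => σ ^ m) atTop (𝓝 0) :=
        tendsto_pow_atTop_nhds_zero_of_lt_one hσ0.le hσ1
      obtain ⟨M, hM⟩ := eventually_atTop.1
        (hσm.eventually (eventually_lt_nhds (div_pos hcb hA₁)))
      apply hb2
      apply Set.Finite.subset ((Set.finite_Iio N).prod (Set.finite_Iio (N + M)))
      rintro ⟨k, n⟩ ⟨h1, h2, h3, h4⟩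
      have hkN : k < N := by
        by_contra hk
        exact hcon ⟨k, n, le_of_not_gt hk, h1, h2, h3, h4⟩
      simp only [Set.mem_prod, Set.mem_Iio]
      refine ⟨hkN, ?_⟩
      by_contra hn
      have hnk : M ≤ n - k := by omega
      have hσlt : σ ^ (n - k) < cb / A₁ := hM _ hnk
      have hble : cb ≤ b ^ (p ^ k : ℝ) :=
        Real.rpow_le_rpow_of_exponent_ge h0 hb1.2
          (pow_le_pow_right₀ hp1.le (le_of_lt hkN))
      have hσpos : (0:ℝ) < σ ^ (n - k) := pow_pos hσ0 _
      rw [div_lt_iff₀ hσpos] at h4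
      rw [lt_div_iff₀ hA₁] at hσlt
      nlinarith
  · rintro ⟨hb1, h2⟩
    refine ⟨hb1, ?_⟩
    by_contra hfin
    rw [Set.not_infinite] at hfin
    obtain ⟨M, hM⟩ := (hfin.image Prod.fst).bddAbove
    obtain ⟨k, n, hk1, hk2, hk3, hk4, hk5⟩ := h2 (M + 1)
    have hmem : ((k, n) : ℕ × ℕ) ∈ {kn : ℕ × ℕ | 0 < kn.1 ∧ kn.1 < kn.2 ∧
        A₀ < b ^ (p ^ kn.1) / σ ^ (kn.2 - kn.1) ∧
        b ^ (p ^ kn.1) / σ ^ (kn.2 - kn.1) < A₁} := ⟨hk2, hk3, hk4, hk5⟩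
    have : k ≤ M := hM (Set.mem_image_of_mem Prod.fst hmem)
    omega

/-- Theorem of Hazard–Lyubich–Martens: the set of parameters `b ∈ [0,1]` with infinitely
many `0 < k < n` satisfying `A₀ < b^{p^k}/σ^{n−k} < A₁` is a dense `G_δ` subset of `[0,1]`
of full Lebesgue measure. -/
theorem hlm_dense_Gdelta_full_measure (A₀ A₁ σ p : ℝ)
    (hA₀ : 0 < A₀) (hA : A₀ < A₁) (hσ0 : 0 < σ) (hσ1 : σ < 1) (hp : 2 ≤ p) :
    IsGδ (hlmParamSet A₀ A₁ σ p)
    ∧ Set.Icc (0 : ℝ) 1 ⊆ closure (hlmParamSet A₀ A₁ σ p)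
    ∧ volume (Set.Icc (0 : ℝ) 1 \ hlmParamSet A₀ A₁ σ p) = 0 := by
  have heq := hlmParamSet_eq A₀ A₁ σ p hA₀ hA hσ0 hσ1 hp
  -- full measure
  have hnull : volume (Set.Icc (0 : ℝ) 1 \ hlmParamSet A₀ A₁ σ p) = 0 := by
    have hsub : Set.Icc (0 : ℝ) 1 \ hlmParamSet A₀ A₁ σ p ⊆
        ⋃ N : ℕ, (Set.Icc (0:ℝ) 1 \ hlmV A₀ A₁ σ p N) := by
      intro b hb
      rw [heq] at hb
      obtain ⟨hb1, hb2⟩ := hb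
      rw [Set.mem_inter_iff, not_and_or] at hb2
      rcases hb2 with h | h
      · exact absurd hb1 h
      · rw [Set.mem_iInter] at h
        push_neg at h
        obtain ⟨N, hN⟩ := h
        exact Set.mem_iUnion.2 ⟨N, hb1, hN⟩
    exact measure_mono_null hsub (measure_iUnion_null fun N =>
      hlmV_compl_null A₀ A₁ σ p hA₀ hA hσ0 hσ1 hp N)
  refine ⟨?_, ?_, hnull⟩
  · rw [heq]
    exact isClosed_Icc.isGδ.inter (IsGδ.iInter fun N => (hlmV_open A₀ A₁ σ p hp N).isGδ)
  · -- density from full measure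
    intro b hb
    rw [_root_.mem_closure_iff]
    intro O hO hbO
    obtain ⟨ε, hε, hball⟩ := Metric.isOpen_iff.1 hO b hbO
    set lo : ℝ := max 0 (b - ε) with hlo
    set hi : ℝ := min 1 (b + ε) with hhi
    have hlohi : lo < hi := by
      rw [hlo, hhi]
      rcases hb with ⟨hb0, hb1⟩
      simp only [lt_min_iff, max_lt_iff]
      refine ⟨⟨one_pos, by linarith⟩, ⟨by linarith, by linarith⟩⟩
    have hIsub : Set.Ioo lo hi ⊆ O ∩ Set.Icc 0 1 := by
      intro y hy
      refine ⟨hball ?_, ?_⟩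
      · rw [Real.ball_eq_Ioo]
        exact ⟨lt_of_le_of_lt (le_max_right 0 (b - ε)) hy.1,
          lt_of_lt_of_le hy.2 (min_le_right 1 (b + ε))⟩
      · exact ⟨le_trans (le_max_left 0 (b - ε)) hy.1.le,
          le_trans hy.2.le (min_le_left 1 (b + ε))⟩
    by_contra hempty
    rw [Set.not_nonempty_iff_eq_empty] at hempty
    have hdisj : Set.Ioo lo hi ⊆ Set.Icc (0:ℝ) 1 \ hlmParamSet A₀ A₁ σ p := by
      intro y hy
      refine ⟨(hIsub hy).2, fun hyS => ?_⟩
      have : y ∈ O ∩ hlmParamSet A₀ A₁ σ p := ⟨(hIsub hy).1, hyS⟩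
      rw [hempty] at this
      exact this
    have hpos : (0:ℝ≥0∞) < volume (Set.Ioo lo hi) := by
      rw [Real.volume_Ioo]
      exact ENNReal.ofReal_pos.2 (by linarith)
    exact absurd (measure_mono_null hdisj hnull) (ne_of_gt hpos)
end
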